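/- Every subgroup of index 7 in PSL(2,7) is isomorphic to the symmetric group S4. -/

import Mathlib

open MatrixGroups

namespace PSL27Aux

abbrev SL7 := Matrix.SpecialLinearGroup (Fin 2) (ZMod 7)

instance : DecidableEq SL7 := fun a b => decidable_of_iff (a.1 = b.1) Subtype.ext_iff.symm

set_option maxRecDepth 40000 in
lemma card_SL7 : Nat.card SL7 = 336 := by
  rw [Nat.card_eq_fintype_card]; decide

set_option maxRecDepth 40000 in
set_option maxHeartbeats 2000000 in
lemma sl_no6 : ∀ s : SL7, (s^6 = 1 ∨ s^6 = -1) →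
    ((s^2 = 1 ∨ s^2 = -1) ∨ (s^3 = 1 ∨ s^3 = -1)) := by decide

lemma scalar_one : (Matrix.scalar (Fin 2)) (1 : ZMod 7) = ((1 : SL7) : Matrix (Fin 2) (Fin 2) (ZMod 7)) := by
  simp

lemma zmod7_sq : ∀ r : ZMod 7, r ^ 2 = 1 → r = 1 ∨ r = -1 := by decide

lemma scalar_neg_one : (Matrix.scalar (Fin 2)) (-1 : ZMod 7) = ((-1 : SL7) : Matrix (Fin 2) (Fin 2) (ZMod 7)) := by
  have : ((-1 : SL7) : Matrix (Fin 2) (Fin 2) (ZMod 7)) = -((1 : SL7) : Matrix (Fin 2) (Fin 2) (ZMod 7)) := rfl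
  rw [this, ← scalar_one, map_neg]

lemma mem_center_iff' (A : SL7) :
    A ∈ Subgroup.center SL7 ↔ A = 1 ∨ A = -1 := by
  rw [Matrix.SpecialLinearGroup.mem_center_iff]
  constructor
  · rintro ⟨r, hr, hrA⟩
    have hr2 : r ^ 2 = 1 := by simpa using hr
    have hr' : r = 1 ∨ r = -1 := zmod7_sq r hr2
    rcases hr' with rfl | rfl
    · exact Or.inl (Subtype.ext (hrA ▸ scalar_one.symm).symm)
    · exact Or.inr (Subtype.ext (hrA ▸ scalar_neg_one.symm).symm)
  · rintro (rfl | rfl)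
    · exact ⟨1, by simp, scalar_one⟩
    · exact ⟨-1, by simp, scalar_neg_one⟩

lemma card_center : Nat.card (Subgroup.center SL7) = 2 := by
  have hset : (Subgroup.center SL7 : Set SL7) = {1, -1} := by
    ext A
    simpa [Set.mem_insert_iff] using mem_center_iff' A
  have hne : (1 : SL7) ≠ -1 := by decide
  have e : ((Subgroup.center SL7 : Set SL7)) ≃ (({1, -1} : Set SL7)) := Equiv.setCongr hset
  exact (Nat.card_congr e).trans (by rw [Nat.card_coe_set_eq, Set.ncard_pair hne])

lemma card_PSL : Nat.card PSL(2, ZMod 7) = 168 := by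
  have h := Subgroup.card_mul_index (Subgroup.center SL7)
  rw [card_center, card_SL7] at h
  have : (Subgroup.center SL7).index = 168 := by omega
  exact this

lemma no_order6 : ∀ y : PSL(2, ZMod 7), y^6 = 1 → y^2 = 1 ∨ y^3 = 1 := by
  intro y h6
  induction y using QuotientGroup.induction_on with
  | H s =>
    have hmk : ∀ n : ℕ, ((QuotientGroup.mk s : PSL(2, ZMod 7)) ^ n) = QuotientGroup.mk (s ^ n) :=
      fun n => by rfl
    have h6' : s ^ 6 = 1 ∨ s ^ 6 = -1 := by
      rw [hmk, QuotientGroup.eq_one_iff] at h6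
      exact (mem_center_iff' _).mp h6
    rcases sl_no6 s h6' with h | h
    · left
      rw [hmk, QuotientGroup.eq_one_iff]
      exact (mem_center_iff' _).mpr h
    · right
      rw [hmk, QuotientGroup.eq_one_iff]
      exact (mem_center_iff' _).mpr h

lemma key_lemma {Γ : Type*} [Group Γ] (hNo6 : ∀ y : Γ, y^6 = 1 → y^2 = 1 ∨ y^3 = 1)
    {z x : Γ} (hz : z ^ 2 = 1) (hx : x ^ 3 = 1) (hc : z * x = x * z) :
    z = 1 ∨ x = 1 := by
  have hcomm : Commute z x := hc
  have h6 : (z * x) ^ 6 = 1 := by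
    rw [hcomm.mul_pow]
    have hz6 : z ^ 6 = 1 := by rw [show (6:ℕ) = 2*3 by norm_num, pow_mul, hz, one_pow]
    have hx6 : x ^ 6 = 1 := by rw [show (6:ℕ) = 3*2 by norm_num, pow_mul, hx, one_pow]
    rw [hz6, hx6, one_mul]
  rcases hNo6 _ h6 with h | h
  · right
    rw [hcomm.mul_pow, hz, one_mul] at h
    calc x = x ^ 3 * (x ^ 2)⁻¹ := by group
    _ = 1 := by rw [hx, h]; group
  · left
    rw [hcomm.mul_pow, hx, mul_one] at h
    calc z = z ^ 3 * (z ^ 2)⁻¹ := by group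
    _ = 1 := by rw [h, hz]; group

/-- A permutation-congruence as a `MulEquiv`. -/
def permMulEquiv {α β : Type*} (e : α ≃ β) : Equiv.Perm α ≃* Equiv.Perm β :=
  { e.permCongr with
    map_mul' := fun p q => Equiv.ext fun b => by
      simp [Equiv.permCongr_apply, Equiv.Perm.mul_apply] }

end PSL27Aux

set_option maxHeartbeats 1000000 in
open PSL27Aux in
/-- Every subgroup of index 7 in PSL(2,7) is isomorphic to the symmetric group S₄. -/
theorem index_seven_subgroup_of_PSL27_is_S4 (K : Subgroup PSL(2, ZMod 7))
    (hK : K.index = 7) : Nonempty (↥K ≃* Equiv.Perm (Fin 4)) := by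
  classical
  haveI : Finite PSL(2, ZMod 7) := Nat.finite_of_card_ne_zero (by rw [card_PSL]; norm_num)
  haveI : Fact (Nat.Prime 2) := ⟨Nat.prime_two⟩
  haveI : Fact (Nat.Prime 3) := ⟨Nat.prime_three⟩
  have hcardK : Nat.card ↥K = 24 := by
    have h := Subgroup.card_mul_index K
    rw [hK, card_PSL] at h; omega
  -- transfer of the "no element of order 6" fact into K
  have key' : ∀ z x : ↥K, z ^ 2 = 1 → x ^ 3 = 1 → z * x = x * z → z = 1 ∨ x = 1 := by
    intro z x hz hx hc
    have hz' : (z : PSL(2, ZMod 7)) ^ 2 = 1 := by exact_mod_cast congrArg Subtype.val hz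
    have hx' : (x : PSL(2, ZMod 7)) ^ 3 = 1 := by exact_mod_cast congrArg Subtype.val hx
    have hc' : (z : PSL(2, ZMod 7)) * x = x * z := by exact_mod_cast congrArg Subtype.val hc
    rcases key_lemma no_order6 hz' hx' hc' with h | h
    · exact Or.inl (by exact_mod_cast h)
    · exact Or.inr (by exact_mod_cast h)
  -- an element of order 3 cannot have a centralizer of even order
  have lemE : ∀ x : ↥K, orderOf x = 3 →
      2 ∣ Nat.card (Subgroup.centralizer {x} : Subgroup ↥K) → False := by
    intro x hx3 h2
    obtain ⟨z', hz'⟩ :=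
      exists_prime_orderOf_dvd_card' (G := (Subgroup.centralizer {x} : Subgroup ↥K)) 2 h2
    have hzx : x * (z' : ↥K) = (z' : ↥K) * x :=
      (Subgroup.mem_centralizer_iff.mp z'.2) x rfl
    have hzord : orderOf (z' : ↥K) = 2 := by rw [Subgroup.orderOf_coe]; exact hz'
    have hz2 : (z' : ↥K) ^ 2 = 1 := by
      have := pow_orderOf_eq_one (z' : ↥K); rwa [hzord] at this
    have hx1 : x ^ 3 = 1 := by
      have := pow_orderOf_eq_one x; rwa [hx3] at this
    rcases key' (z' : ↥K) x hz2 hx1 hzx.symm with h | h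
    · rw [h, orderOf_one] at hzord; norm_num at hzord
    · rw [h, orderOf_one] at hx3; norm_num at hx3
  -- classification of conjugates inside a cyclic group of order 3
  have lemConj : ∀ x y : ↥K, orderOf y = 3 → x * y * x⁻¹ ∈ Subgroup.zpowers y →
      x * y * x⁻¹ = y ∨ x * y * x⁻¹ = y⁻¹ := by
    intro x y hy3 hmem
    obtain ⟨m, hm⟩ := Subgroup.mem_zpowers_iff.mp hmem
    have hy1 : y ≠ 1 := by intro h; rw [h, orderOf_one] at hy3; omega
    have hmod : y ^ (m % 3) = x * y * x⁻¹ := by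
      rw [← hm]
      have h' := zpow_mod_orderOf y m
      rw [hy3] at h'
      exact_mod_cast h'
    have hrange : m % 3 = 0 ∨ m % 3 = 1 ∨ m % 3 = 2 := by omega
    rcases hrange with h | h | h
    · exfalso
      rw [h, zpow_zero] at hmod
      apply hy1
      calc y = x⁻¹ * (x * y * x⁻¹) * x := by group
      _ = 1 := by rw [← hmod]; group
    · left; rw [h, zpow_one] at hmod; exact hmod.symm
    · right
      rw [h] at hmod
      rw [← hmod]
      have h3 : y ^ (2:ℤ) * y = 1 := by
        have : y ^ (3:ℕ) = 1 := by
          have h'' := pow_orderOf_eq_one y; rwa [hy3] at h''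
        calc y ^ (2:ℤ) * y = y ^ (3:ℕ) := by push_cast; group
        _ = 1 := this
      exact eq_inv_of_mul_eq_one_left h3
  -- generator of a subgroup of order 3
  have gen3 : ∀ P : Subgroup ↥K, Nat.card P = 3 →
      ∃ y : ↥K, orderOf y = 3 ∧ Subgroup.zpowers y = P := by
    intro P hP
    haveI := isCyclic_of_prime_card (p := 3) hP
    obtain ⟨g, hg⟩ := IsCyclic.exists_generator (α := P)
    have hord : orderOf g = 3 := by rw [orderOf_eq_card_of_forall_mem_zpowers hg, hP]
    refine ⟨(g : ↥K), by rw [Subgroup.orderOf_coe]; exact hord, ?_⟩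
    have hle : Subgroup.zpowers (g : ↥K) ≤ P := Subgroup.zpowers_le.mpr g.2
    refine Subgroup.eq_of_le_of_card_ge hle ?_
    rw [hP, Nat.card_zpowers, Subgroup.orderOf_coe, hord]
  haveI : Finite (Sylow 3 ↥K) :=
    Finite.of_injective (fun P => ((P : Subgroup ↥K) : Set ↥K))
      (fun P Q h => by ext k; exact Set.ext_iff.mp h k)
  have hPcard : ∀ P : Sylow 3 ↥K, Nat.card (P : Subgroup ↥K) = 3 := by
    intro P
    have hfact24 : (Nat.factorization 24) 3 = 1 := by
      have h1 : 3 ^ 1 ∣ 24 := by norm_num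
      have h2 : ¬ 3 ^ 2 ∣ 24 := by norm_num
      rw [Nat.Prime.pow_dvd_iff_le_factorization Nat.prime_three (by norm_num)] at h1 h2
      omega
    rw [P.card_eq_multiplicity, hcardK, hfact24, pow_one]
  -- No Sylow 3-subgroup of K is normal
  have hnon : ∀ P : Sylow 3 ↥K, ¬ (P : Subgroup ↥K).Normal := by
    intro P hnorm
    obtain ⟨y, hy3, hzp⟩ := gen3 P (hPcard P)
    set C := Subgroup.centralizer ({y} : Set ↥K) with hC
    have hmemC : ∀ g : ↥K, g * y * g⁻¹ = y → g ∈ C := by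
      intro g h
      rw [Subgroup.mem_centralizer_iff]
      intro a ha
      rw [Set.mem_singleton_iff] at ha
      rw [ha]
      calc y * g = (g * y * g⁻¹) * g := by rw [h]
      _ = g * y := by group
    have hconj : ∀ k : ↥K, k * y * k⁻¹ = y ∨ k * y * k⁻¹ = y⁻¹ := by
      intro k
      apply lemConj k y hy3
      rw [hzp]
      exact hnorm.conj_mem y (by rw [← hzp]; exact Subgroup.mem_zpowers y) k
    have hidx : C.index ≤ 2 := by
      by_cases hCtop : ∀ k : ↥K, k ∈ C
      · have : C = ⊤ := by ext k; simp [hCtop k]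
        rw [this, Subgroup.index_top]; omega
      · push_neg at hCtop
        obtain ⟨l, hl⟩ := hCtop
        have hly : l * y * l⁻¹ = y⁻¹ := (hconj l).resolve_left (fun h => hl (hmemC l h))
        have hsurj : Function.Surjective
            (fun b : Bool => if b then (QuotientGroup.mk l : ↥K ⧸ C) else QuotientGroup.mk 1) := by
          intro q
          obtain ⟨k, rfl⟩ := QuotientGroup.mk_surjective q
          by_cases hk : k ∈ C
          · refine ⟨false, ?_⟩
            show (QuotientGroup.mk 1 : ↥K ⧸ C) = QuotientGroup.mk k
            rw [QuotientGroup.eq]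
            simpa using hk
          · refine ⟨true, ?_⟩
            show (QuotientGroup.mk l : ↥K ⧸ C) = QuotientGroup.mk k
            rw [QuotientGroup.eq]
            apply hmemC
            have hky : k * y * k⁻¹ = y⁻¹ := (hconj k).resolve_left fun h => hk (hmemC k h)
            have h2 : l⁻¹ * y⁻¹ * l = y := by rw [← hly]; group
            calc (l⁻¹ * k) * y * (l⁻¹ * k)⁻¹ = l⁻¹ * (k * y * k⁻¹) * l := by group
            _ = y := by rw [hky]; exact h2
        calc C.index = Nat.card (↥K ⧸ C) := rfl
        _ ≤ Nat.card Bool := Nat.card_le_card_of_surjective _ hsurj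
        _ = 2 := by simp
    have h2C : 2 ∣ Nat.card C := by
      have h := Subgroup.card_mul_index C
      rw [hcardK] at h
      have hpos : 0 < C.index := Nat.pos_of_ne_zero Subgroup.index_ne_zero_of_finite
      interval_cases h' : C.index <;> omega
    exact lemE y hy3 h2C
  -- the number of Sylow 3-subgroups is 4
  have hn3 : Nat.card (Sylow 3 ↥K) = 4 := by
    have h1 : Nat.card (Sylow 3 ↥K) ≡ 1 [MOD 3] := card_sylow_modEq_one 3 ↥K
    obtain ⟨P⟩ : Nonempty (Sylow 3 ↥K) := inferInstance
    have hdvd : Nat.card (Sylow 3 ↥K) ∣ (P : Subgroup ↥K).index := P.card_dvd_index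
    have hPidx : (P : Subgroup ↥K).index = 8 := by
      have h := Subgroup.card_mul_index (P : Subgroup ↥K)
      rw [hPcard P, hcardK] at h; omega
    rw [hPidx] at hdvd
    have hne1 : Nat.card (Sylow 3 ↥K) ≠ 1 := by
      intro h
      apply hnon P
      rw [← Subgroup.normalizer_eq_top_iff]
      apply Subgroup.index_eq_one.mp
      exact P.card_eq_index_normalizer.symm.trans h
    have hle : Nat.card (Sylow 3 ↥K) ≤ 8 := Nat.le_of_dvd (by norm_num) hdvd
    have h1' : Nat.card (Sylow 3 ↥K) % 3 = 1 % 3 := h1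
    interval_cases h' : Nat.card (Sylow 3 ↥K) <;> omega
  -- the conjugation action on Sylow 3-subgroups
  set φ := MulAction.toPermHom ↥K (Sylow 3 ↥K) with hφ
  have hkerle : ∀ P : Sylow 3 ↥K, φ.ker ≤ MulAction.stabilizer ↥K P := by
    intro P k hk
    have h1 : φ k = 1 := hk
    have : k • P = P := by
      calc k • P = (φ k) P := rfl
      _ = P := by rw [h1]; rfl
    exact this
  obtain ⟨P₀⟩ : Nonempty (Sylow 3 ↥K) := inferInstance
  have hkerdvd : Nat.card φ.ker ∣ 6 := by
    have hstab : Nat.card (MulAction.stabilizer ↥K P₀) = 6 := by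
      have h1 : (MulAction.stabilizer ↥K P₀).index = 4 := by
        rw [MulAction.index_stabilizer_of_transitive, hn3]
      have h := Subgroup.card_mul_index (MulAction.stabilizer ↥K P₀)
      rw [h1, hcardK] at h; omega
    rw [← hstab]
    exact Subgroup.card_dvd_of_le (hkerle P₀)
  have hkertriv : φ.ker = ⊥ := by
    by_contra hne
    have hcard_ne1 : Nat.card φ.ker ≠ 1 := fun h => hne (Subgroup.card_eq_one.mp h)
    by_cases h3 : 3 ∣ Nat.card φ.ker
    · -- an element of order 3 in the kernel
      obtain ⟨x', hx'⟩ := exists_prime_orderOf_dvd_card' (G := φ.ker) 3 h3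
      have hx3 : orderOf (x' : ↥K) = 3 := by rw [Subgroup.orderOf_coe]; exact hx'
      set x : ↥K := (x' : ↥K) with hxdef
      have hpg : IsPGroup 3 (Subgroup.zpowers x) := by
        apply IsPGroup.of_card (n := 1)
        rw [Nat.card_zpowers, hx3, pow_one]
      obtain ⟨P₁, hP₁⟩ := hpg.exists_le_sylow
      haveI : Nontrivial (Sylow 3 ↥K) := by
        apply (Finite.one_lt_card_iff_nontrivial).mp
        rw [hn3]; norm_num
      obtain ⟨P₂, hP₂⟩ := exists_ne P₁
      obtain ⟨y, hy3, hzp⟩ := gen3 P₂ (hPcard P₂)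
      have hxst : x ∈ MulAction.stabilizer ↥K P₂ := hkerle P₂ x'.2
      rw [Sylow.stabilizer_eq_normalizer] at hxst
      have hconjmem : x * y * x⁻¹ ∈ Subgroup.zpowers y := by
        rw [hzp]
        exact (Subgroup.mem_normalizer_iff.mp hxst y).mp (by rw [← hzp]; exact Subgroup.mem_zpowers y)
      rcases lemConj x y hy3 hconjmem with hcomm | hinv
      · -- x commutes with y, x ∉ ⟨y⟩ : the centralizer of y has even order
        have hxy : x * y = y * x := by
          calc x * y = (x * y * x⁻¹) * x := by group
          _ = y * x := by rw [hcomm]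
        have hxnot : x ∉ Subgroup.zpowers y := by
          intro hmem
          have h1 : Subgroup.zpowers x ≤ (P₂ : Subgroup ↥K) :=
            Subgroup.zpowers_le.mpr (hzp ▸ (Subgroup.zpowers_le.mpr hmem) (Subgroup.mem_zpowers x))
          have e1 : Subgroup.zpowers x = (P₁ : Subgroup ↥K) :=
            Subgroup.eq_of_le_of_card_ge hP₁ (by rw [hPcard P₁, Nat.card_zpowers, hx3])
          have e2 : Subgroup.zpowers x = (P₂ : Subgroup ↥K) :=
            Subgroup.eq_of_le_of_card_ge h1 (by rw [hPcard P₂, Nat.card_zpowers, hx3])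
          exact hP₂ (Sylow.ext (e2 ▸ e1))
        set C := Subgroup.centralizer ({y} : Set ↥K) with hCdef
        have hyC : Subgroup.zpowers y ≤ C := by
          rw [Subgroup.zpowers_le, Subgroup.mem_centralizer_iff]
          intro a ha
          rw [Set.mem_singleton_iff] at ha
          rw [ha]
        have hxC : x ∈ C := by
          rw [Subgroup.mem_centralizer_iff]
          intro a ha
          rw [Set.mem_singleton_iff] at ha
          rw [ha]
          exact hxy.symm
        have h3C : 3 ∣ Nat.card C := by
          have := Subgroup.card_dvd_of_le hyC
          rwa [Nat.card_zpowers, hy3] at this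
        have hCne3 : Nat.card C ≠ 3 := by
          intro h
          have : Subgroup.zpowers y = C :=
            Subgroup.eq_of_le_of_card_ge hyC (by rw [h, Nat.card_zpowers, hy3])
          exact hxnot (this ▸ hxC)
        have hCdvd : Nat.card C ∣ 24 := by
          rw [← hcardK]; exact Subgroup.card_subgroup_dvd_card C
        have h2C : 2 ∣ Nat.card C := by
          have hle : Nat.card C ≤ 24 := Nat.le_of_dvd (by norm_num) hCdvd
          have hpos : 0 < Nat.card C := Nat.card_pos
          interval_cases h' : Nat.card C <;> omega
        exact lemE y hy3 h2C
      · -- x inverts y : impossible since x has order 3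
        have hx1 : x ^ 3 = 1 := by
          have := pow_orderOf_eq_one x; rwa [hx3] at this
        have hyy : y = y⁻¹ := by
          have step : ∀ w : ↥K, x * w * x⁻¹ = w⁻¹ → x * w⁻¹ * x⁻¹ = w := by
            intro w hw
            calc x * w⁻¹ * x⁻¹ = (x * w * x⁻¹)⁻¹ := by
                  rw [mul_inv_rev, mul_inv_rev, inv_inv, mul_assoc]
            _ = w := by rw [hw]; group
          have hxxx : x * x * x = 1 := by
            have h' : x ^ 3 = x * x * x := by rw [pow_succ, pow_two]
            rw [← h', hx1]
          calc y = (x * x * x) * y * (x * x * x)⁻¹ := by rw [hxxx]; group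
          _ = x * (x * (x * y * x⁻¹) * x⁻¹) * x⁻¹ := by group
          _ = x * (x * y⁻¹ * x⁻¹) * x⁻¹ := by rw [hinv]
          _ = x * y * x⁻¹ := by rw [step y hinv]
          _ = y⁻¹ := hinv
        have hy2 : y ^ 2 = 1 := by
          calc y ^ 2 = y * y := by rw [pow_two]
          _ = y⁻¹ * y := by rw [← hyy]
          _ = 1 := by group
        have := orderOf_dvd_of_pow_eq_one hy2
        rw [hy3] at this
        norm_num at this
    · -- the kernel has order 2
      have h2 : Nat.card φ.ker = 2 := by
        have hle : Nat.card φ.ker ≤ 6 := Nat.le_of_dvd (by norm_num) hkerdvd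
        have hpos : 0 < Nat.card φ.ker := Nat.card_pos
        interval_cases h' : Nat.card φ.ker <;> omega
      obtain ⟨z', hz'⟩ := exists_prime_orderOf_dvd_card' (G := φ.ker) 2 (by rw [h2])
      have hzord : orderOf (z' : ↥K) = 2 := by rw [Subgroup.orderOf_coe]; exact hz'
      set z : ↥K := (z' : ↥K) with hzdef
      obtain ⟨x, hx3⟩ := exists_prime_orderOf_dvd_card' (G := ↥K) 3 (by rw [hcardK]; norm_num)
      have hzne : z ≠ 1 := by intro h; rw [h, orderOf_one] at hzord; norm_num at hzord
      have hxne : x ≠ 1 := by intro h; rw [h, orderOf_one] at hx3; norm_num at hx3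
      haveI : φ.ker.Normal := MonoidHom.normal_ker φ
      have hmemk : x * z * x⁻¹ ∈ φ.ker := this.conj_mem z z'.2 x
      have hconj_ne : x * z * x⁻¹ ≠ 1 := by
        intro h
        apply hzne
        calc z = x⁻¹ * (x * z * x⁻¹) * x := by group
        _ = 1 := by rw [h]; group
      have huniq : x * z * x⁻¹ = z := by
        by_contra hne2
        have hinj : Function.Injective
            (![⟨1, φ.ker.one_mem⟩, ⟨z, z'.2⟩, ⟨x * z * x⁻¹, hmemk⟩] : Fin 3 → φ.ker) := by
          intro i j hij
          fin_cases i <;> fin_cases j <;>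
            first
            | rfl
            | (exfalso; rw [Subtype.ext_iff] at hij; simp at hij;
               first
               | exact hzne hij.symm
               | exact hzne hij
               | exact hconj_ne hij.symm
               | exact hconj_ne hij
               | exact hne2 hij.symm
               | exact hne2 hij)
        have hle := Nat.card_le_card_of_injective _ hinj
        rw [h2, Nat.card_eq_fintype_card] at hle
        simp at hle
      have hzx : z * x = x * z := by
        calc z * x = (x * z * x⁻¹) * x := by rw [huniq]
        _ = x * z := by group
      have hz2 : z ^ 2 = 1 := by
        have := pow_orderOf_eq_one z; rwa [hzord] at this
      have hx1 : x ^ 3 = 1 := by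
        have := pow_orderOf_eq_one x; rwa [hx3] at this
      rcases key' z x hz2 hx1 hzx with h | h
      · exact hzne h
      · exact hxne h
  -- conclusion: K embeds in Perm (Fin 4), and cardinalities agree
  have hinj : Function.Injective φ := (MonoidHom.ker_eq_bot_iff φ).mp hkertriv
  haveI : Fintype (Sylow 3 ↥K) := Fintype.ofFinite _
  have hfin4 : Fintype.card (Sylow 3 ↥K) = 4 := by
    rw [← Nat.card_eq_fintype_card]; exact hn3
  let e : Sylow 3 ↥K ≃ Fin 4 := Fintype.equivFinOfCardEq hfin4
  let ι : Equiv.Perm (Sylow 3 ↥K) ≃* Equiv.Perm (Fin 4) := permMulEquiv e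
  let ψ : ↥K →* Equiv.Perm (Fin 4) := ι.toMonoidHom.comp φ
  have hψinj : Function.Injective ψ := ι.injective.comp hinj
  have hcards : Nat.card ↥K = Nat.card (Equiv.Perm (Fin 4)) := by
    rw [hcardK, Nat.card_eq_fintype_card]
    simp only [Fintype.card_perm, Fintype.card_fin]
    decide
  exact ⟨MulEquiv.ofBijective ψ ((Nat.bijective_iff_injective_and_card ψ).mpr ⟨hψinj, hcards⟩)⟩
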